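/- For every infinite set X there exists a simple graph H whose vertex set has the same cardinality as X and whose automorphism group is trivial, i.e., the only bijection of the vertex set of H onto itself that preserves adjacency in both directions is the identity. -/

import Mathlib

universe u

section Rigid

variable {W : Type u} [LinearOrder W]

/-- Adjacency: true-vertices form a clique; a false-vertex `(false, a)` is joined to the
true-vertices `(true, b)` with `b ≤ a`; false-vertices are pairwise non-adjacent. -/
def rigidAdj (u v : Bool × W) : Prop :=
  match u, v with
  | (false, _), (false, _) => False
  | (false, a), (true, b) => b ≤ a
  | (true, a), (false, b) => a ≤ b
  | (true, a), (true, b) => a ≠ b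

lemma rigidAdj_symm : ∀ u v : Bool × W, rigidAdj u v → rigidAdj v u := by
  rintro ⟨(_|_), a⟩ ⟨(_|_), b⟩ h
  · exact h
  · exact h
  · exact h
  · exact fun e => h e.symm

lemma rigidAdj_irrefl : ∀ u : Bool × W, ¬ rigidAdj u u := by
  rintro ⟨(_|_), a⟩ h
  · exact h
  · exact h rfl

/-- The rigid graph. -/
def rigidGraph : SimpleGraph (Bool × W) where
  Adj := rigidAdj
  symm := ⟨rigidAdj_symm⟩
  loopless := ⟨rigidAdj_irrefl⟩

lemma rigidGraph_adj_ff (a b : W) :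
    ¬ (rigidGraph.Adj ((false : Bool), a) ((false : Bool), b)) := fun h => h

lemma rigidGraph_adj_ft (a b : W) :
    rigidGraph.Adj ((false : Bool), a) ((true : Bool), b) ↔ b ≤ a := Iff.rfl

lemma rigidGraph_adj_tt (a b : W) :
    rigidGraph.Adj ((true : Bool), a) ((true : Bool), b) ↔ a ≠ b := Iff.rfl

lemma adj_false_fst (a : W) (x : Bool × W) (h : rigidGraph.Adj ((false : Bool), a) x) :
    x.1 = true := by
  rcases x with ⟨(_|_), b⟩
  · exact absurd h (rigidGraph_adj_ff a b)
  · rfl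

variable [NoMaxOrder W]

/-- Any automorphism sends false-vertices to false-vertices. -/
lemma auto_false_to_false (f : (Bool × W) ≃ (Bool × W))
    (hf : ∀ a b : Bool × W, rigidGraph.Adj (f a) (f b) ↔ rigidGraph.Adj a b)
    (a : W) : (f ((false : Bool), a)).1 = false := by
  by_contra hc
  obtain ⟨c, hcc⟩ : ∃ c, f (false, a) = ((true : Bool), c) := by
    rcases hfa : f (false, a) with ⟨(_|_), c⟩
    · exact absurd (by rw [hfa]) hc
    · exact ⟨c, rfl⟩
  obtain ⟨c', hc'⟩ := exists_gt c
  set x : Bool × W := f.symm ((false : Bool), c) with hx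
  set y : Bool × W := f.symm ((false : Bool), c') with hy
  have hfx : f x = ((false : Bool), c) := f.apply_symm_apply _
  have hfy : f y = ((false : Bool), c') := f.apply_symm_apply _
  have hax : rigidGraph.Adj ((false : Bool), a) x := by
    rw [← hf, hcc, hfx]; exact le_refl c
  have hay : rigidGraph.Adj ((false : Bool), a) y := by
    rw [← hf, hcc, hfy]; exact le_of_lt hc'
  obtain ⟨bx, hbx⟩ : ∃ b, x = ((true : Bool), b) := by
    rcases hxx : x with ⟨bb, b⟩
    have := adj_false_fst a _ hax
    rw [hxx] at this; subst this; exact ⟨b, rfl⟩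
  obtain ⟨by', hby⟩ : ∃ b, y = ((true : Bool), b) := by
    rcases hyy : y with ⟨bb, b⟩
    have := adj_false_fst a _ hay
    rw [hyy] at this; subst this; exact ⟨b, rfl⟩
  have hxyne : bx ≠ by' := by
    intro h
    have hxy : x = y := by rw [hbx, hby, h]
    have : ((false : Bool), c) = ((false : Bool), c') := by rw [← hfx, ← hfy, hxy]
    exact absurd (Prod.ext_iff.mp this).2 (ne_of_lt hc')
  have hadj : rigidGraph.Adj x y := by rw [hbx, hby]; exact hxyne
  have : rigidGraph.Adj ((false : Bool), c) ((false : Bool), c') := by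
    rw [← hfx, ← hfy, hf]; exact hadj
  exact this

lemma auto_true_to_true (f : (Bool × W) ≃ (Bool × W))
    (hf : ∀ a b : Bool × W, rigidGraph.Adj (f a) (f b) ↔ rigidGraph.Adj a b)
    (b : W) : (f ((true : Bool), b)).1 = true := by
  have hfsymm : ∀ a b : Bool × W, rigidGraph.Adj (f.symm a) (f.symm b) ↔ rigidGraph.Adj a b := by
    intro a b
    conv_rhs => rw [← f.apply_symm_apply a, ← f.apply_symm_apply b]
    exact (hf _ _).symm
  by_contra hc
  obtain ⟨c, hcc⟩ : ∃ c, f (true, b) = ((false : Bool), c) := by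
    rcases hfb : f (true, b) with ⟨(_|_), c⟩
    · exact ⟨c, rfl⟩
    · exact absurd (by rw [hfb]) hc
  have h1 := auto_false_to_false f.symm hfsymm c
  rw [← hcc, f.symm_apply_apply] at h1
  exact absurd h1 (by simp)

variable [WellFoundedLT W]

/-- The rigid graph has no nontrivial automorphisms. -/
theorem rigidGraph_rigid (f : (Bool × W) ≃ (Bool × W))
    (hf : ∀ a b : Bool × W, rigidGraph.Adj (f a) (f b) ↔ rigidGraph.Adj a b) :
    f = Equiv.refl (Bool × W) := by
  have hfsymm : ∀ a b : Bool × W, rigidGraph.Adj (f.symm a) (f.symm b) ↔ rigidGraph.Adj a b := by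
    intro a b
    conv_rhs => rw [← f.apply_symm_apply a, ← f.apply_symm_apply b]
    exact (hf _ _).symm
  set g : W → W := fun a => (f ((false : Bool), a)).2 with hg
  set h : W → W := fun b => (f ((true : Bool), b)).2 with hh
  have hfg : ∀ a, f ((false : Bool), a) = ((false : Bool), g a) := by
    intro a
    have h1 := auto_false_to_false f hf a
    rcases hfa : f (false, a) with ⟨bb, c⟩
    rw [hfa] at h1; subst h1
    simp only [hg, hfa]
  have hfh : ∀ b, f ((true : Bool), b) = ((true : Bool), h b) := by
    intro b
    have h1 := auto_true_to_true f hf b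
    rcases hfb : f (true, b) with ⟨bb, c⟩
    rw [hfb] at h1; subst h1
    simp only [hh, hfb]
  -- key relation : h b ≤ g a ↔ b ≤ a
  have key : ∀ a b : W, h b ≤ g a ↔ b ≤ a := by
    intro a b
    have := hf ((false : Bool), a) ((true : Bool), b)
    rw [hfg, hfh] at this
    exact this
  -- g is injective
  have hginj : Function.Injective g := by
    intro a a' haa
    have : f ((false : Bool), a) = f ((false : Bool), a') := by rw [hfg, hfg, haa]
    exact (Prod.ext_iff.mp (f.injective this)).2
  -- g is surjective
  have hgsurj : Function.Surjective g := by
    intro c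
    refine ⟨(f.symm ((false : Bool), c)).2, ?_⟩
    have h1 := auto_false_to_false f.symm hfsymm c
    have h2 : f.symm ((false : Bool), c) =
        ((false : Bool), (f.symm ((false : Bool), c)).2) := by
      rcases hs : f.symm ((false : Bool), c) with ⟨bb, d⟩
      rw [hs] at h1; subst h1; rfl
    have h3 := hfg (f.symm ((false : Bool), c)).2
    rw [← h2, f.apply_symm_apply] at h3
    exact (Prod.ext_iff.mp h3).2.symm
  -- h is surjective
  have hhsurj : Function.Surjective h := by
    intro c
    refine ⟨(f.symm ((true : Bool), c)).2, ?_⟩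
    have h1 := auto_true_to_true f.symm hfsymm c
    have h2 : f.symm ((true : Bool), c) =
        ((true : Bool), (f.symm ((true : Bool), c)).2) := by
      rcases hs : f.symm ((true : Bool), c) with ⟨bb, d⟩
      rw [hs] at h1; subst h1; rfl
    have h3 := hfh (f.symm ((true : Bool), c)).2
    rw [← h2, f.apply_symm_apply] at h3
    exact (Prod.ext_iff.mp h3).2.symm
  -- g is monotone, via surjectivity of h
  have hgmono : Monotone g := by
    intro a a' haa
    obtain ⟨b₀, hb₀⟩ := hhsurj (g a)
    have h1 : b₀ ≤ a := (key a b₀).mp (le_of_eq hb₀)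
    have h2 : b₀ ≤ a' := le_trans h1 haa
    have h3 := (key a' b₀).mpr h2
    rwa [hb₀] at h3
  have hgsm : StrictMono g := hgmono.strictMono_of_injective hginj
  -- g is the identity
  have hgid : ∀ a, g a = a := by
    let e : W ≃o W := StrictMono.orderIsoOfSurjective g hgsm hgsurj
    have hce : ∀ a, e a = g a := fun _ => rfl
    intro a
    have h1 : a ≤ g a := hgsm.le_apply
    have h2 : g a ≤ a := by
      have h3 : e a ≤ e.symm (e a) := e.symm.strictMono.le_apply
      rw [e.symm_apply_apply, hce] at h3
      exact h3
    exact le_antisymm h2 h1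
  -- h is the identity
  have hhid : ∀ b, h b = b := by
    intro b
    have h1 : h b ≤ b := by
      have := (key b b).mpr (le_refl b)
      rwa [hgid] at this
    have h2 : b ≤ h b := by
      have := (key (h b) b).mp (by rw [hgid])
      exact this
    exact le_antisymm h1 h2
  apply Equiv.ext
  rintro ⟨(_|_), w⟩
  · rw [hfg, hgid]; rfl
  · rw [hfh, hhid]; rfl

end Rigid

/-- For every infinite set `X` there exists a simple graph whose vertex set has the same
cardinality as `X` and whose automorphism group is trivial: the only self-bijection of the
vertex set preserving adjacency in both directions is the identity. -/
theorem stmt_13 (X : Type u) [Infinite X] :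
    ∃ (V : Type u) (G : SimpleGraph V),
      Cardinal.mk V = Cardinal.mk X ∧
      ∀ f : V ≃ V, (∀ a b : V, G.Adj (f a) (f b) ↔ G.Adj a b) → f = Equiv.refl V := by
  classical
  letI : LinearOrder X := linearOrderOfSTO WellOrderingRel
  haveI : WellFoundedLT X := ⟨(WellOrderingRel.isWellOrder (α := X)).wf⟩
  refine ⟨Bool × (X ×ₗ ℕ), rigidGraph, ?_, fun f hf => rigidGraph_rigid f hf⟩
  have h1 : Cardinal.mk (Bool × (X ×ₗ ℕ)) = Cardinal.mk (Bool × (X × ℕ)) := rfl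
  rw [h1]
  have hℵ : Cardinal.aleph0 ≤ Cardinal.mk X := Cardinal.infinite_iff.mp ‹Infinite X›
  letI : Denumerable (ℕ × Bool) := Denumerable.ofEncodableOfInfinite _
  have e : Bool × (X × ℕ) ≃ X × (ℕ × Bool) :=
    (Equiv.prodComm _ _).trans (Equiv.prodAssoc _ _ _)
  have e2 : X × (ℕ × Bool) ≃ X × ℕ := Equiv.prodCongr (Equiv.refl X) (Denumerable.eqv _)
  rw [Cardinal.mk_congr (e.trans e2)]
  rw [Cardinal.mk_prod, Cardinal.lift_uzero, Cardinal.mk_nat, Cardinal.lift_aleph0,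
    Cardinal.mul_aleph0_eq hℵ]
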